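/- Let X be a compact metric space and F : X → X an arbitrary (not necessarily continuous) self-map. Then there exists a minimal closed F-invariant equivalence relation R on X such that the induced map F_R on the quotient X/R is continuous; that is, the intersection of all closed F-invariant equivalence relations R' for which F_{R'} is continuous is itself such a relation. -/

import Mathlib

/-- A closed `F`-invariant equivalence relation whose induced map on the quotient
is continuous. -/
def GoodRel {X : Type*} [TopologicalSpace X] (F : X → X) (r : X → X → Prop) : Prop :=
  Equivalence r ∧ IsClosed {p : X × X | r p.1 p.2} ∧
    ∃ h : ∀ a b, r a b → r (F a) (F b), Continuous (Quot.map F h : Quot r → Quot r)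

section aux

variable {X : Type*} [TopologicalSpace X] [CompactSpace X] [T2Space X]
  {s : X → X → Prop}

omit [TopologicalSpace X] [CompactSpace X] [T2Space X] in
lemma quot_exact_of_equiv (hs : Equivalence s) {x y : X}
    (h : Quot.mk s x = Quot.mk s y) : s x y :=
  hs.eqvGen_iff.mp (Quot.eq.mp h)

lemma quot_mk_isClosedMap (hs : Equivalence s)
    (hcl : IsClosed {p : X × X | s p.1 p.2}) : IsClosedMap (Quot.mk s) := by
  intro C hC
  rw [← isQuotientMap_quot_mk.isClosed_preimage]
  have key : (Quot.mk s) ⁻¹' (Quot.mk s '' C)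
      = Prod.snd '' ({p : X × X | s p.1 p.2} ∩ C ×ˢ Set.univ) := by
    ext x
    constructor
    · rintro ⟨c, hc, hcx⟩
      exact ⟨(c, x), ⟨quot_exact_of_equiv hs hcx, hc, trivial⟩, rfl⟩
    · rintro ⟨⟨c, x'⟩, ⟨hrel, hc, -⟩, rfl⟩
      exact ⟨c, hc, Quot.sound hrel⟩
  rw [key]
  exact (((hcl.inter (hC.prod isClosed_univ)).isCompact).image continuous_snd).isClosed

lemma t2_quot (hs : Equivalence s)
    (hcl : IsClosed {p : X × X | s p.1 p.2}) : T2Space (Quot s) := by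
  have hmap := quot_mk_isClosedMap hs hcl
  refine ⟨fun a b hab => ?_⟩
  obtain ⟨x, rfl⟩ := Quot.exists_rep a
  obtain ⟨y, rfl⟩ := Quot.exists_rep b
  have hxy : ¬ s x y := fun h => hab (Quot.sound h)
  have hfx : IsClosed {z | s x z} :=
    hcl.preimage (show Continuous fun z : X => (x, z) from continuous_const.prodMk continuous_id)
  have hfy : IsClosed {z | s y z} :=
    hcl.preimage (show Continuous fun z : X => (y, z) from continuous_const.prodMk continuous_id)
  have hdisj : Disjoint {z | s x z} {z | s y z} :=
    Set.disjoint_left.mpr fun z h1 h2 => hxy (hs.trans h1 (hs.symm h2))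
  obtain ⟨U, V, hU, hV, hxU, hyV, hUV⟩ := normal_separation hfx hfy hdisj
  refine ⟨(Quot.mk s '' Uᶜ)ᶜ, (Quot.mk s '' Vᶜ)ᶜ,
    (hmap _ hU.isClosed_compl).isOpen_compl, (hmap _ hV.isClosed_compl).isOpen_compl,
    ?_, ?_, ?_⟩
  · rintro ⟨c, hc, hcx⟩
    exact hc (hxU (hs.symm (quot_exact_of_equiv hs hcx)))
  · rintro ⟨c, hc, hcy⟩
    exact hc (hyV (hs.symm (quot_exact_of_equiv hs hcy)))
  · rw [Set.disjoint_left]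
    rintro q hq1 hq2
    obtain ⟨z, rfl⟩ := Quot.exists_rep q
    have hzU : z ∈ U := by
      by_contra h; exact hq1 ⟨z, h, rfl⟩
    have hzV : z ∈ V := by
      by_contra h; exact hq2 ⟨z, h, rfl⟩
    exact Set.disjoint_left.mp hUV hzU hzV

end aux

theorem stmt_13 {X : Type*} [MetricSpace X] [CompactSpace X] (F : X → X) :
    ∃ r : X → X → Prop, GoodRel F r ∧
      (∀ r' : X → X → Prop, GoodRel F r' → ∀ x y, r x y → r' x y) ∧
      (∀ x y, (∀ r' : X → X → Prop, GoodRel F r' → r' x y) → r x y) := by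
  classical
  set r : X → X → Prop := fun x y => ∀ r' : X → X → Prop, GoodRel F r' → r' x y with hr
  refine ⟨r, ?_, fun r' hg x y hxy => hxy r' hg, fun x y h => h⟩
  have hequiv : Equivalence r :=
    ⟨fun x r' hg => hg.1.refl x, fun h r' hg => hg.1.symm (h r' hg),
      fun h1 h2 r' hg => hg.1.trans (h1 r' hg) (h2 r' hg)⟩
  have hclosed : IsClosed {p : X × X | r p.1 p.2} := by
    have heq : {p : X × X | r p.1 p.2}
        = ⋂ s : {p : X → X → Prop // GoodRel F p}, {p : X × X | s.val p.1 p.2} := by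
      ext p
      simp only [Set.mem_iInter, Set.mem_setOf_eq, Subtype.forall]
      exact Iff.rfl
    rw [heq]
    exact isClosed_iInter fun s => s.prop.2.1
  have hinv : ∀ a b, r a b → r (F a) (F b) :=
    fun a b h r' hg => hg.2.2.choose a b (h r' hg)
  refine ⟨hequiv, hclosed, hinv, ?_⟩
  -- the embedding into the product of all good quotients
  haveI : ∀ s : {p : X → X → Prop // GoodRel F p}, T2Space (Quot s.val) :=
    fun s => t2_quot s.prop.1 s.prop.2.1
  set e : Quot r → ∀ s : {p : X → X → Prop // GoodRel F p}, Quot s.val :=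
    Quot.lift (fun x s => Quot.mk s.val x)
      (fun a b hab => funext fun s => Quot.sound (hab s.val s.prop)) with he
  have hcont : Continuous e :=
    continuous_quot_lift _ (continuous_pi fun s => continuous_quot_mk)
  have hinj : Function.Injective e := by
    intro a b hab
    obtain ⟨x, rfl⟩ := Quot.exists_rep a
    obtain ⟨y, rfl⟩ := Quot.exists_rep b
    refine Quot.sound fun r' hg => ?_
    have := congrFun hab ⟨r', hg⟩
    exact quot_exact_of_equiv hg.1 this
  have hemb := (hcont.isClosedEmbedding hinj).isEmbedding
  rw [isQuotientMap_quot_mk.continuous_iff, hemb.continuous_iff]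
  have : (e ∘ (Quot.map F hinv ∘ Quot.mk r))
      = fun (x : X) (s : {p : X → X → Prop // GoodRel F p}) => Quot.mk s.val (F x) := rfl
  rw [this]
  refine continuous_pi fun s => ?_
  obtain ⟨hs, hcs⟩ := s.prop.2.2
  exact hcs.comp continuous_quot_mk
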